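/- Let a₁₁, a₁₂, b₂₁, b₂₂ ∈ ℝ be such that at least one of them is positive and at least one is negative, and suppose σ_# := 2a₁₁ + a₁₂ + b₂₁ + 2b₂₂ ≠ 0. Then there exist positive reals ã₁₁, ã₁₂, b̃₂₁, b̃₂₂ > 0 such that (3ã₁₁a₁₁ + ã₁₂a₁₂ + b̃₂₁b₂₁ + 3b̃₂₂b₂₂)·σ_# < 0. Consequently, for any coefficients with a sign change, one can choose symmetric smooth convex approximations of the absolute value (with quadratic terms having coefficients proportional to ã₁₁, ã₁₂, b̃₂₁, b̃₂₂) such that the first Lyapunov coefficient of the smoothened planar Hopf bifurcation has sign opposite to that of the non-smooth one, i.e., the criticality of the smoothened bifurcation is opposite to the criticality of the non-smooth case. -/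

import Mathlib

lemma auxneg (r x : ℝ) (hx : x < 0) : ∃ T : ℝ, 0 < T ∧ r + T * x < 0 := by
  have hx' : 0 < -x := by linarith
  refine ⟨(|r| + 1) / (-x), by positivity, ?_⟩
  have h : (|r| + 1) / (-x) * x = -(|r| + 1) := by
    field_simp
    rw [div_self hx.ne]
  rw [h]
  have := le_abs_self r
  linarith

lemma auxpos (r x : ℝ) (hx : 0 < x) : ∃ T : ℝ, 0 < T ∧ 0 < r + T * x := by
  obtain ⟨T, hT, h⟩ := auxneg (-r) (-x) (by linarith)
  exact ⟨T, hT, by linarith⟩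

/-- If among `a₁₁, a₁₂, b₂₁, b₂₂` at least one is positive and at least one
is negative, and the non-smooth first Lyapunov coefficient
`σ_# = 2a₁₁ + a₁₂ + b₂₁ + 2b₂₂` is nonzero, then there exist positive weights
`ã₁₁, ã₁₂, b̃₂₁, b̃₂₂ > 0` such that the smoothened first Lyapunov coefficient
`3ã₁₁a₁₁ + ã₁₂a₁₂ + b̃₂₁b₂₁ + 3b̃₂₂b₂₂` has sign opposite to `σ_#`. -/
theorem stmt10 (a11 a12 b21 b22 : ℝ)
    (hpos : 0 < a11 ∨ 0 < a12 ∨ 0 < b21 ∨ 0 < b22)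
    (hneg : a11 < 0 ∨ a12 < 0 ∨ b21 < 0 ∨ b22 < 0)
    (hσ : 2 * a11 + a12 + b21 + 2 * b22 ≠ 0) :
    ∃ ta11 ta12 tb21 tb22 : ℝ, 0 < ta11 ∧ 0 < ta12 ∧ 0 < tb21 ∧ 0 < tb22 ∧
      (3 * ta11 * a11 + ta12 * a12 + tb21 * b21 + 3 * tb22 * b22) *
        (2 * a11 + a12 + b21 + 2 * b22) < 0 := by
  rcases lt_or_gt_of_ne hσ with hs | hs
  · -- σ < 0 : need sum > 0, use a positive entry
    rcases hpos with h | h | h | h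
    · obtain ⟨T, hT, hsum⟩ := auxpos (a12 + b21 + 3 * b22) (3 * a11) (by linarith)
      exact ⟨T, 1, 1, 1, hT, one_pos, one_pos, one_pos,
        mul_neg_of_pos_of_neg (by nlinarith) hs⟩
    · obtain ⟨T, hT, hsum⟩ := auxpos (3 * a11 + b21 + 3 * b22) a12 h
      exact ⟨1, T, 1, 1, one_pos, hT, one_pos, one_pos,
        mul_neg_of_pos_of_neg (by nlinarith) hs⟩
    · obtain ⟨T, hT, hsum⟩ := auxpos (3 * a11 + a12 + 3 * b22) b21 h
      exact ⟨1, 1, T, 1, one_pos, one_pos, hT, one_pos,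
        mul_neg_of_pos_of_neg (by nlinarith) hs⟩
    · obtain ⟨T, hT, hsum⟩ := auxpos (3 * a11 + a12 + b21) (3 * b22) (by linarith)
      exact ⟨1, 1, 1, T, one_pos, one_pos, one_pos, hT,
        mul_neg_of_pos_of_neg (by nlinarith) hs⟩
  · -- σ > 0 : need sum < 0, use a negative entry
    rcases hneg with h | h | h | h
    · obtain ⟨T, hT, hsum⟩ := auxneg (a12 + b21 + 3 * b22) (3 * a11) (by linarith)
      exact ⟨T, 1, 1, 1, hT, one_pos, one_pos, one_pos,
        mul_neg_of_neg_of_pos (by nlinarith) hs⟩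
    · obtain ⟨T, hT, hsum⟩ := auxneg (3 * a11 + b21 + 3 * b22) a12 h
      exact ⟨1, T, 1, 1, one_pos, hT, one_pos, one_pos,
        mul_neg_of_neg_of_pos (by nlinarith) hs⟩
    · obtain ⟨T, hT, hsum⟩ := auxneg (3 * a11 + a12 + 3 * b22) b21 h
      exact ⟨1, 1, T, 1, one_pos, one_pos, hT, one_pos,
        mul_neg_of_neg_of_pos (by nlinarith) hs⟩
    · obtain ⟨T, hT, hsum⟩ := auxneg (3 * a11 + a12 + b21) (3 * b22) (by linarith)
      exact ⟨1, 1, 1, T, one_pos, one_pos, one_pos, hT,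
        mul_neg_of_neg_of_pos (by nlinarith) hs⟩
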